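/- Let {S₁, S₂, S₃, S₄, S₅} be a complete set of Pauli classes in dimension d = 4, and let S be the unique maximal commuting Pauli class, not equal up to phase to any of S₁, S₂, S₃, all of whose members are equal up to phase to members of S₁ ∪ S₂ ∪ S₃. Then S, S₄, S₅ are pairwise disjoint and the family {S, S₄, S₅} is unextendible: there is no maximal commuting Pauli class all of whose members are non-identity two-qubit Pauli operators not equal up to phase to any member of S ∪ S₄ ∪ S₅. -/

import Mathlib

open Matrix

noncomputable section

/-- Matrices on the Hilbert space of `n` qubits, with rows and columns indexed by
bit strings `Fin n → Fin 2`. -/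
abbrev QMat (n : ℕ) := Matrix (Fin n → Fin 2) (Fin n → Fin 2) ℂ

/-- The single-qubit identity. -/
def pI : Matrix (Fin 2) (Fin 2) ℂ := 1

/-- The single-qubit Pauli X. -/
def pX : Matrix (Fin 2) (Fin 2) ℂ := !![0, 1; 1, 0]

/-- The single-qubit Pauli Y. -/
def pY : Matrix (Fin 2) (Fin 2) ℂ := !![0, -Complex.I; Complex.I, 0]

/-- The single-qubit Pauli Z. -/
def pZ : Matrix (Fin 2) (Fin 2) ℂ := !![1, 0; 0, -1]

/-- The `n`-fold Kronecker product `W 0 ⊗ ⋯ ⊗ W (n-1)`, realized on indices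
`Fin n → Fin 2`. -/
def kron (n : ℕ) (W : Fin n → Matrix (Fin 2) (Fin 2) ℂ) : QMat n :=
  fun v w => ∏ j, W j (v j) (w j)

/-- `M` is an `n`-qubit Pauli operator: an `n`-fold Kronecker product of matrices
from `{I₂, X, Y, Z}`. -/
def IsPauliOp (n : ℕ) (M : QMat n) : Prop :=
  ∃ W : Fin n → Matrix (Fin 2) (Fin 2) ℂ,
    (∀ j, W j = pI ∨ W j = pX ∨ W j = pY ∨ W j = pZ) ∧ M = kron n W

/-- Two matrices are equal up to phase if one is a nonzero scalar multiple of the other. -/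
def PhaseEq {m : Type*} (A B : Matrix m m ℂ) : Prop := ∃ c : ℂ, c ≠ 0 ∧ A = c • B

/-- A maximal commuting Pauli class in dimension `d = 2 ^ n`: a set of `d - 1`
pairwise commuting non-identity `n`-qubit Pauli operators, pairwise distinct up to phase. -/
def IsMaxClass (n : ℕ) (C : Set (QMat n)) : Prop :=
  C.Finite ∧ C.ncard = 2 ^ n - 1 ∧
  (∀ U ∈ C, IsPauliOp n U ∧ U ≠ 1) ∧
  (∀ U ∈ C, ∀ V ∈ C, U * V = V * U) ∧
  (∀ U ∈ C, ∀ V ∈ C, U ≠ V → ¬ PhaseEq U V)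

/-- Two classes are disjoint if no member of one is equal up to phase to a member of the other. -/
def ClassDisjoint {n : ℕ} (C D : Set (QMat n)) : Prop :=
  ∀ U ∈ C, ∀ V ∈ D, ¬ PhaseEq U V

/-- Two classes are equal up to phase (as sets of operators). -/
def ClassPhaseEq {n : ℕ} (C D : Set (QMat n)) : Prop :=
  (∀ U ∈ C, ∃ V ∈ D, PhaseEq U V) ∧ (∀ V ∈ D, ∃ U ∈ C, PhaseEq U V)

/-- The standard Hermitian inner product on `ι → ℂ` (conjugate-linear in the first slot). -/
def cinner {ι : Type*} [Fintype ι] (x y : ι → ℂ) : ℂ :=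
  ∑ k, (starRingEnd ℂ) (x k) * y k


-- ===== auxiliary development =====

abbrev V2 := Fin 2 → Fin 4

def pauli1 : Fin 4 → Matrix (Fin 2) (Fin 2) ℂ := ![pI, pX, pY, pZ]

def P (v : V2) : QMat 2 := kron 2 (fun j => pauli1 (v j))

def sq1 : Fin 4 → Fin 4 → Bool := fun a b => !(a = 0 || b = 0 || a = b)
def som (v w : V2) : Bool := xor (sq1 (v 0) (w 0)) (sq1 (v 1) (w 1))

def x4 (a b : Fin 4) : Fin 4 := ⟨(a.val ^^^ b.val) % 4, Nat.mod_lt _ (by norm_num)⟩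

def vadd (v w : V2) : V2 := fun j => x4 (v j) (w j)

def z2 : V2 := fun _ => 0

lemma vext {v w : V2} (h0 : v 0 = w 0) (h1 : v 1 = w 1) : v = w :=
  funext fun j => by fin_cases j <;> assumption

lemma vne {v w : V2} (h : v ≠ w) : v 0 ≠ w 0 ∨ v 1 ≠ w 1 := by
  by_contra hc; push_neg at hc; exact h (vext hc.1 hc.2)

-- component leaf lemmas
lemma x4_comm : ∀ a b, x4 a b = x4 b a := by decide
lemma x4_self : ∀ a, x4 a a = 0 := by decide
lemma x4_zero : ∀ a, x4 a 0 = a := by decide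
lemma x4_assoc : ∀ a b c, x4 (x4 a b) c = x4 a (x4 b c) := by decide
lemma x4_cancel : ∀ a b, x4 a (x4 a b) = b := by decide
lemma sq1_symm : ∀ a b, sq1 a b = sq1 b a := by decide
lemma sq1_self : ∀ a, sq1 a a = false := by decide
lemma sq1_add : ∀ a b c, sq1 (x4 a b) c = xor (sq1 a c) (sq1 b c) := by decide

-- vector versions
lemma vadd_comm' (v w : V2) : vadd v w = vadd w v := vext (x4_comm _ _) (x4_comm _ _)
lemma vadd_self' (v : V2) : vadd v v = z2 := vext (x4_self _) (x4_self _)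
lemma vadd_zero' (v : V2) : vadd v z2 = v := vext (x4_zero _) (x4_zero _)
lemma vadd_assoc' (u v w : V2) : vadd (vadd u v) w = vadd u (vadd v w) :=
  vext (x4_assoc _ _ _) (x4_assoc _ _ _)
lemma vadd_cancel' (v w : V2) : vadd v (vadd v w) = w := vext (x4_cancel _ _) (x4_cancel _ _)
lemma som_symm (v w : V2) : som v w = som w v := by
  simp [som, sq1_symm (v 0) (w 0), sq1_symm (v 1) (w 1)]
lemma som_self (v : V2) : som v v = false := by simp [som, sq1_self]
lemma som_add_left (u v w : V2) : som (vadd u v) w = xor (som u w) (som v w) := by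
  simp only [som, vadd, sq1_add]
  rcases Bool.eq_false_or_eq_true (sq1 (u 0) (w 0)) with h|h <;>
  rcases Bool.eq_false_or_eq_true (sq1 (v 0) (w 0)) with h'|h' <;>
  rcases Bool.eq_false_or_eq_true (sq1 (u 1) (w 1)) with h''|h'' <;>
  rcases Bool.eq_false_or_eq_true (sq1 (v 1) (w 1)) with h'''|h''' <;>
  simp [h, h', h'', h''']
lemma som_add_right (u v w : V2) : som u (vadd v w) = xor (som u v) (som u w) := by
  rw [som_symm, som_add_left, som_symm v u, som_symm w u]

-- perp4 : maximal isotropy, component level then vector level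
lemma perp4_comp : ∀ a0 a1 b0 b1 c0 c1 : Fin 4,
    ¬(a0 = 0 ∧ a1 = 0) → ¬(b0 = 0 ∧ b1 = 0) → ¬(a0 = b0 ∧ a1 = b1) →
    xor (sq1 a0 b0) (sq1 a1 b1) = false →
    xor (sq1 c0 a0) (sq1 c1 a1) = false →
    xor (sq1 c0 b0) (sq1 c1 b1) = false →
    ((c0 = 0 ∧ c1 = 0) ∨ (c0 = a0 ∧ c1 = a1) ∨ (c0 = b0 ∧ c1 = b1) ∨
      (c0 = x4 a0 b0 ∧ c1 = x4 a1 b1)) := by decide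

lemma perp4 (t0 t1 x : V2) (h0 : t0 ≠ z2) (h1 : t1 ≠ z2) (hne : t0 ≠ t1)
    (ht : som t0 t1 = false) (hx0 : som x t0 = false) (hx1 : som x t1 = false) :
    x = z2 ∨ x = t0 ∨ x = t1 ∨ x = vadd t0 t1 := by
  have := perp4_comp (t0 0) (t0 1) (t1 0) (t1 1) (x 0) (x 1)
    (fun hc => h0 (vext hc.1 hc.2)) (fun hc => h1 (vext hc.1 hc.2))
    (fun hc => hne (vext hc.1 hc.2)) ht hx0 hx1
  rcases this with ⟨u,v⟩|⟨u,v⟩|⟨u,v⟩|⟨u,v⟩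
  · exact Or.inl (vext u v)
  · exact Or.inr (Or.inl (vext u v))
  · exact Or.inr (Or.inr (Or.inl (vext u v)))
  · exact Or.inr (Or.inr (Or.inr (vext u v)))

-- closure
lemma closure_comp : ∀ a0 a1 b0 b1 c0 c1 : Fin 4,
    ((a0 = 0 ∧ a1 = 0) ∨ (b0 = 0 ∧ b1 = 0) ∨ (c0 = 0 ∧ c1 = 0) ∨
     (a0 = b0 ∧ a1 = b1) ∨ (a0 = c0 ∧ a1 = c1) ∨ (b0 = c0 ∧ b1 = c1) ∨
     xor (sq1 a0 b0) (sq1 a1 b1) = true ∨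
     xor (sq1 a0 c0) (sq1 a1 c1) = true ∨
     xor (sq1 b0 c0) (sq1 b1 c1) = true) ∨
    (c0 = x4 a0 b0 ∧ c1 = x4 a1 b1) := by decide

lemma vclosure (a b c : V2) (ha : a ≠ z2) (hb : b ≠ z2) (hc : c ≠ z2)
    (hab : a ≠ b) (hac : a ≠ c) (hbc : b ≠ c)
    (s1 : som a b = false) (s2 : som a c = false) (s3 : som b c = false) :
    c = vadd a b := by
  rcases closure_comp (a 0) (a 1) (b 0) (b 1) (c 0) (c 1) with h | h
  · exfalso
    rcases h with h|h|h|h|h|h|h|h|h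
    · exact ha (vext h.1 h.2)
    · exact hb (vext h.1 h.2)
    · exact hc (vext h.1 h.2)
    · exact hab (vext h.1 h.2)
    · exact hac (vext h.1 h.2)
    · exact hbc (vext h.1 h.2)
    · rw [show (sq1 (a 0) (b 0) ^^ sq1 (a 1) (b 1)) = som a b from rfl, s1] at h
      exact Bool.false_ne_true h
    · rw [show (sq1 (a 0) (c 0) ^^ sq1 (a 1) (c 1)) = som a c from rfl, s2] at h
      exact Bool.false_ne_true h
    · rw [show (sq1 (b 0) (c 0) ^^ sq1 (b 1) (c 1)) = som b c from rfl, s3] at h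
      exact Bool.false_ne_true h
  · exact vext h.1 h.2

lemma x4_rearr : ∀ a b c d : Fin 4, x4 (x4 a b) (x4 c d) = x4 (x4 c a) (x4 b d) := by decide
lemma x4_cancel2 : ∀ e a b : Fin 4, x4 (x4 e a) (x4 e b) = x4 a b := by decide

lemma vadd_rearr (a b c d : V2) : vadd (vadd a b) (vadd c d) = vadd (vadd c a) (vadd b d) :=
  vext (x4_rearr _ _ _ _) (x4_rearr _ _ _ _)
lemma vadd_cancel2 (e a b : V2) : vadd (vadd e a) (vadd e b) = vadd a b :=
  vext (x4_cancel2 _ _ _) (x4_cancel2 _ _ _)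

lemma vadd_move {p x y : V2} (h : vadd p x = y) : p = vadd y x := by
  rw [← h, vadd_assoc', vadd_self', vadd_zero']

lemma kill (t0 t1 x0 x1 p q : V2)
    (ht0 : t0 ≠ z2) (ht1 : t1 ≠ z2) (ht01 : t0 ≠ t1) (hstt : som t0 t1 = false)
    (hxt0 : som x0 t0 = false) (hxt1 : som x1 t1 = false) (hxx : som x0 x1 = false)
    (ha : som x0 t1 = true) (hb : som x1 t0 = true)
    (hpx : p ≠ x0) (hpx' : p ≠ vadd t0 x0)
    (hqx : q ≠ x1) (hqx' : q ≠ vadd t1 x1)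
    (hpt0 : som p t0 = false) (hpt1 : som p t1 = true)
    (hqt0 : som q t0 = true) (hqt1 : som q t1 = false)
    (hpq : som p q = false)
    (hr1 : vadd p q ≠ vadd x0 x1)
    (hr2 : vadd p q ≠ vadd (vadd t0 t1) (vadd x0 x1)) : False := by
  have h1 : som (vadd p x0) t0 = false := by rw [som_add_left, hpt0, hxt0]; rfl
  have h2 : som (vadd p x0) t1 = false := by rw [som_add_left, hpt1, ha]; rfl
  have h1q : som (vadd q x1) t0 = false := by rw [som_add_left, hqt0, hb]; rfl
  have h2q : som (vadd q x1) t1 = false := by rw [som_add_left, hqt1, hxt1]; rfl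
  have hp4 := perp4 t0 t1 (vadd p x0) ht0 ht1 ht01 hstt h1 h2
  have hq4 := perp4 t0 t1 (vadd q x1) ht0 ht1 ht01 hstt h1q h2q
  rcases hp4 with h | h | h | h
  · exact hpx (by rw [vadd_move h, vadd_comm', vadd_zero'])
  · exact hpx' (by rw [vadd_move h, vadd_comm'])
  · -- p = vadd t1 x0
    have hp : p = vadd t1 x0 := by rw [vadd_move h, vadd_comm']
    rcases hq4 with h' | h' | h' | h'
    · exact hqx (by rw [vadd_move h', vadd_comm', vadd_zero'])
    · -- q = vadd t0 x1  ⇒ p + q = (t0+t1)+(x0+x1)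
      have hq : q = vadd t0 x1 := by rw [vadd_move h', vadd_comm']
      exact hr2 (by rw [hp, hq, vadd_rearr t1 x0 t0 x1])
    · exact hqx' (by rw [vadd_move h', vadd_comm'])
    · -- q = vadd (vadd t0 t1) x1 ⇒ som p q = true
      have hq : q = vadd (vadd t0 t1) x1 := by rw [vadd_move h', vadd_comm']
      rw [hp, hq] at hpq
      rw [som_add_left, som_add_right, som_add_right, som_add_right, som_add_right] at hpq
      rw [som_symm t1 t0, som_symm t1 x1] at hpq
      rw [hstt, som_self, hxt1, hxt0, ha, hxx] at hpq
      simp at hpq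
  · -- p = vadd (vadd t0 t1) x0
    have hp : p = vadd (vadd t0 t1) x0 := by rw [vadd_move h, vadd_comm']
    rcases hq4 with h' | h' | h' | h'
    · exact hqx (by rw [vadd_move h', vadd_comm', vadd_zero'])
    · -- q = vadd t0 x1 ⇒ som p q = som t0 x1 = true
      have hq : q = vadd t0 x1 := by rw [vadd_move h', vadd_comm']
      rw [hp, hq] at hpq
      rw [som_add_left, som_add_left, som_add_right, som_add_right, som_add_right] at hpq
      rw [som_symm t0 x1] at hpq
      rw [som_self, som_symm t1 t0, hstt, som_symm t1 x1, hxt1, hxt0, hxx, hb] at hpq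
      simp at hpq
    · exact hqx' (by rw [vadd_move h', vadd_comm'])
    · -- q = vadd (vadd t0 t1) x1 ⇒ p + q = x0 + x1
      have hq : q = vadd (vadd t0 t1) x1 := by rw [vadd_move h', vadd_comm']
      exact hr1 (by rw [hp, hq, vadd_cancel2])


def eqv : (Fin 2 → Fin 2) ≃ Fin 2 × Fin 2 := piFinTwoEquiv (fun _ => Fin 2)

lemma kron_eq_submatrix (W : Fin 2 → Matrix (Fin 2) (Fin 2) ℂ) :
    kron 2 W = (Matrix.kroneckerMap (· * ·) (W 0) (W 1)).submatrix eqv eqv := by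
  ext v w
  simp [kron, Fin.prod_univ_two, eqv, Matrix.kroneckerMap, Matrix.submatrix]

lemma kron_mul (W W' : Fin 2 → Matrix (Fin 2) (Fin 2) ℂ) :
    kron 2 W * kron 2 W' = kron 2 (fun j => W j * W' j) := by
  rw [kron_eq_submatrix, kron_eq_submatrix, kron_eq_submatrix (fun j => W j * W' j)]
  rw [show (Matrix.kroneckerMap (· * ·) ((fun j => W j * W' j) 0) ((fun j => W j * W' j) 1)) =
    (Matrix.kroneckerMap (· * ·) (W 0) (W 1)) * (Matrix.kroneckerMap (· * ·) (W' 0) (W' 1)) from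
      (Matrix.mul_kronecker_mul _ _ _ _)]
  exact (Matrix.submatrix_mul_equiv _ _ _ _ _)

lemma trace_submatrix_eqv (M : Matrix (Fin 2 × Fin 2) (Fin 2 × Fin 2) ℂ) :
    (M.submatrix eqv eqv).trace = M.trace := by
  simp only [Matrix.trace, Matrix.diag, Matrix.submatrix_apply]
  exact Equiv.sum_comp eqv (fun p => M p p)

lemma kron_trace (W : Fin 2 → Matrix (Fin 2) (Fin 2) ℂ) :
    (kron 2 W).trace = (W 0).trace * (W 1).trace := by
  rw [kron_eq_submatrix, trace_submatrix_eqv, Matrix.trace_kronecker]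

lemma pauli_sq : ∀ a : Fin 4, pauli1 a * pauli1 a = 1 := by
  intro a
  fin_cases a <;>
    simp [pauli1, pI, pX, pY, pZ, Matrix.one_fin_two, Matrix.mul_fin_two, Complex.I_mul_I]

lemma pauli_trace : ∀ a b : Fin 4, (pauli1 a * pauli1 b).trace = if a = b then 2 else 0 := by
  intro a b
  fin_cases a <;> fin_cases b <;>
    simp [pauli1, pI, pX, pY, pZ, Matrix.one_fin_two, Matrix.mul_fin_two,
      Matrix.trace_fin_two, Complex.I_mul_I] <;> norm_num

lemma pauli_comm : ∀ a b : Fin 4,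
    pauli1 a * pauli1 b = (if sq1 a b then (-1 : ℂ) else 1) • (pauli1 b * pauli1 a) := by
  intro a b
  fin_cases a <;> fin_cases b <;>
    simp [pauli1, sq1, pI, pX, pY, pZ, Matrix.one_fin_two, Matrix.mul_fin_two,
      Matrix.smul_of, Complex.I_mul_I]

lemma kron_smul₂ (c₀ c₁ : ℂ) (W : Fin 2 → Matrix (Fin 2) (Fin 2) ℂ)
    (W' : Fin 2 → Matrix (Fin 2) (Fin 2) ℂ) (h0 : W 0 = c₀ • W' 0) (h1 : W 1 = c₁ • W' 1) :
    kron 2 W = (c₀ * c₁) • kron 2 W' := by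
  ext v w
  simp only [kron, Fin.prod_univ_two, Matrix.smul_apply, smul_eq_mul]
  rw [h0, h1]
  simp only [Matrix.smul_apply, smul_eq_mul]
  ring

lemma kron_one : kron 2 (fun _ => (1 : Matrix (Fin 2) (Fin 2) ℂ)) = 1 := by
  ext v w
  simp only [kron, Fin.prod_univ_two, Matrix.one_apply]
  by_cases h : v = w
  · subst h; simp
  · have : v 0 ≠ w 0 ∨ v 1 ≠ w 1 := by
      by_contra hc
      push_neg at hc
      exact h (funext fun j => by fin_cases j <;> [exact hc.1; exact hc.2])
    rcases this with h' | h' <;> simp [h', h]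

lemma P_mul_self (v : V2) : P v * P v = 1 := by
  rw [P, kron_mul]
  rw [show (fun j => pauli1 (v j) * pauli1 (v j)) = (fun _ => (1 : Matrix (Fin 2) (Fin 2) ℂ)) from
    funext fun j => pauli_sq (v j)]
  exact kron_one

lemma P_trace_mul (v w : V2) :
    (P v * P w).trace = (if v 0 = w 0 then 2 else 0) * (if v 1 = w 1 then 2 else 0) := by
  rw [P, P, kron_mul, kron_trace]
  simp [pauli_trace]

lemma P_ne_zero (v : V2) : P v ≠ 0 := by
  intro h
  have h4 : (P v * P v).trace = 4 := by
    rw [P_trace_mul]; norm_num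
  rw [h] at h4
  simp at h4

lemma P_zero : P z2 = 1 := by
  rw [P]
  rw [show (fun j : Fin 2 => pauli1 (z2 j)) = (fun _ => (1 : Matrix (Fin 2) (Fin 2) ℂ)) from
    funext fun j => by simp [z2, pauli1, pI]]
  exact kron_one

lemma phaseEq_P {v w : V2} (h : PhaseEq (P v) (P w)) : v = w := by
  obtain ⟨c, hc, hvw⟩ := h
  have h1 : (P v * P w).trace = c * 4 := by
    rw [hvw, Matrix.smul_mul, Matrix.trace_smul, P_mul_self]
    have : Matrix.trace (1 : QMat 2) = 4 := by
      simp [Matrix.trace_one]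
    rw [this]; simp [smul_eq_mul]
  by_contra hne
  have : v 0 ≠ w 0 ∨ v 1 ≠ w 1 := by
    by_contra hcc; push_neg at hcc
    exact hne (funext fun j => by fin_cases j <;> [exact hcc.1; exact hcc.2])
  have h0 : (P v * P w).trace = 0 := by
    rw [P_trace_mul]
    rcases this with h' | h' <;> simp [h']
  rw [h0] at h1
  have := mul_ne_zero hc (by norm_num : (4:ℂ) ≠ 0)
  exact this h1.symm

lemma P_inj {v w : V2} (h : P v = P w) : v = w :=
  phaseEq_P ⟨1, one_ne_zero, by rw [one_smul]; exact h⟩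

lemma P_comm_iff (v w : V2) : P v * P w = P w * P v ↔ som v w = false := by
  have key : P v * P w = (if som v w then (-1:ℂ) else 1) • (P w * P v) := by
    rw [P, P, kron_mul, kron_mul]
    have e0 := pauli_comm (v 0) (w 0)
    have e1 := pauli_comm (v 1) (w 1)
    rw [kron_smul₂ _ _ _ (fun j => pauli1 (w j) * pauli1 (v j)) e0 e1]
    congr 1
    rcases Bool.eq_false_or_eq_true (sq1 (v 0) (w 0)) with h0 | h0 <;>
      rcases Bool.eq_false_or_eq_true (sq1 (v 1) (w 1)) with h1 | h1 <;>
      simp [som, h0, h1]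
  constructor
  · intro h
    by_contra hb
    have hs : som v w = true := by
      rcases Bool.eq_false_or_eq_true (som v w) with h' | h'
      · exact h'
      · exact absurd h' hb
    rw [hs] at key
    simp at key
    rw [h] at key
    have h2 : (2 : ℂ) • (P w * P v) = 0 := by
      have := add_eq_zero_iff_eq_neg.mpr key
      rw [two_smul]
      exact this
    have hwv : P w * P v = 0 := by
      have := smul_eq_zero.mp h2
      rcases this with h' | h'
      · norm_num at h'
      · exact h'
    have : (1 : QMat 2) = 0 := by
      calc (1 : QMat 2) = (P w * P w) := (P_mul_self w).symm
        _ = P w * ((P v * P v) * P w) := by rw [P_mul_self v, one_mul]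
        _ = (P w * P v) * (P v * P w) := by
              rw [mul_assoc, mul_assoc]
        _ = 0 := by rw [hwv, zero_mul]
    have h4 : (Matrix.trace (1 : QMat 2)) = 4 := by
      simp [Matrix.trace_one]
    rw [this] at h4
    simp at h4
  · intro h
    rw [key, h]
    simp

-- BEGIN shadow layer
lemma pauliOp_eq_P {M : QMat 2} (h : IsPauliOp 2 M) : ∃ v : V2, M = P v := by
  obtain ⟨W, hW, hM⟩ := h
  have hch : ∀ j, ∃ a, W j = pauli1 a := by
    intro j
    rcases hW j with h|h|h|h
    · exact ⟨0, by simp [pauli1, h]⟩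
    · exact ⟨1, by simp [pauli1, h]⟩
    · exact ⟨2, by simp [pauli1, h]⟩
    · exact ⟨3, by simp [pauli1, h]⟩
  choose v hv using hch
  refine ⟨v, ?_⟩
  rw [hM, P]
  have : W = fun j => pauli1 (v j) := funext hv
  rw [this]

def shad (C : Set (QMat 2)) : Set V2 := {v | P v ∈ C}

lemma phase_refl (U : QMat 2) : PhaseEq U U := ⟨1, one_ne_zero, (one_smul ℂ U).symm⟩

lemma mem_shad {C : Set (QMat 2)} (hC : IsMaxClass 2 C) {U : QMat 2} (hU : U ∈ C) :
    ∃ v : V2, v ∈ shad C ∧ U = P v := by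
  obtain ⟨v, hv⟩ := pauliOp_eq_P (hC.2.2.1 U hU).1
  exact ⟨v, by rw [shad, Set.mem_setOf_eq, ← hv]; exact hU, hv⟩

lemma shad_nonzero {C : Set (QMat 2)} (hC : IsMaxClass 2 C) : z2 ∉ shad C := by
  intro h
  have := (hC.2.2.1 _ h).2
  rw [P_zero] at this
  exact this rfl

lemma shad_ne_zero {C : Set (QMat 2)} (hC : IsMaxClass 2 C) {v : V2} (hv : v ∈ shad C) :
    v ≠ z2 := fun h => shad_nonzero hC (h ▸ hv)

lemma shad_som {C : Set (QMat 2)} (hC : IsMaxClass 2 C) {v w : V2}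
    (hv : v ∈ shad C) (hw : w ∈ shad C) : som v w = false :=
  (P_comm_iff v w).mp (hC.2.2.2.1 _ hv _ hw)

lemma shad_ncard {C : Set (QMat 2)} (hC : IsMaxClass 2 C) : (shad C).ncard = 3 := by
  have him : C = P '' shad C := by
    apply Set.eq_of_subset_of_subset
    · intro U hU
      obtain ⟨v, hv, rfl⟩ := mem_shad hC hU
      exact ⟨v, hv, rfl⟩
    · rintro U ⟨v, hv, rfl⟩
      exact hv
  have h2 := Set.ncard_image_of_injective (shad C) (fun a b h => P_inj h)
  rw [← him] at h2
  rw [← h2, hC.2.1]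
  rfl

lemma shad_three {C : Set (QMat 2)} (hC : IsMaxClass 2 C) :
    ∃ a b c : V2, a ≠ b ∧ a ≠ c ∧ b ≠ c ∧ shad C = {a, b, c} ∧ c = vadd a b := by
  obtain ⟨a, b, c, hab, hac, hbc, hset⟩ := Set.ncard_eq_three.mp (shad_ncard hC)
  have ha : a ∈ shad C := by rw [hset]; left; rfl
  have hb : b ∈ shad C := by rw [hset]; right; left; rfl
  have hc : c ∈ shad C := by rw [hset]; right; right; rfl
  exact ⟨a, b, c, hab, hac, hbc, hset,
    vclosure a b c (shad_ne_zero hC ha) (shad_ne_zero hC hb) (shad_ne_zero hC hc)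
      hab hac hbc (shad_som hC ha hb) (shad_som hC ha hc) (shad_som hC hb hc)⟩

lemma shad_third {C : Set (QMat 2)} (hC : IsMaxClass 2 C) {p q : V2}
    (hp : p ∈ shad C) (hq : q ∈ shad C) (hpq : p ≠ q) :
    ∃ d, d ∈ shad C ∧ d ≠ p ∧ d ≠ q := by
  obtain ⟨a, b, c, hab, hac, hbc, hset, hcab⟩ := shad_three hC
  have ha : a ∈ shad C := by rw [hset]; left; rfl
  have hb : b ∈ shad C := by rw [hset]; right; left; rfl
  have hc : c ∈ shad C := by rw [hset]; right; right; rfl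
  have hp' : p = a ∨ p = b ∨ p = c := by rw [hset] at hp; exact hp
  have hq' : q = a ∨ q = b ∨ q = c := by rw [hset] at hq; exact hq
  rcases hp' with h1|h1|h1 <;> rcases hq' with h2|h2|h2
  · exact absurd (h1.trans h2.symm) hpq
  · exact ⟨c, hc, by rw [h1]; exact fun h => hac h.symm, by rw [h2]; exact fun h => hbc h.symm⟩
  · exact ⟨b, hb, by rw [h1]; exact fun h => hab h.symm, by rw [h2]; exact hbc⟩
  · exact ⟨c, hc, by rw [h1]; exact fun h => hbc h.symm, by rw [h2]; exact fun h => hac h.symm⟩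
  · exact absurd (h1.trans h2.symm) hpq
  · exact ⟨a, ha, by rw [h1]; exact hab, by rw [h2]; exact hac⟩
  · exact ⟨b, hb, by rw [h1]; exact hbc, by rw [h2]; exact fun h => hab h.symm⟩
  · exact ⟨a, ha, by rw [h1]; exact hac, by rw [h2]; exact hab⟩
  · exact absurd (h1.trans h2.symm) hpq

lemma shad_closure {C : Set (QMat 2)} (hC : IsMaxClass 2 C) {p q r : V2}
    (hp : p ∈ shad C) (hq : q ∈ shad C) (hr : r ∈ shad C)
    (hpq : p ≠ q) (hpr : p ≠ r) (hqr : q ≠ r) : r = vadd p q :=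
  vclosure p q r (shad_ne_zero hC hp) (shad_ne_zero hC hq) (shad_ne_zero hC hr)
    hpq hpr hqr (shad_som hC hp hq) (shad_som hC hp hr) (shad_som hC hq hr)

lemma shad_two {C : Set (QMat 2)} (hC : IsMaxClass 2 C) {p q : V2}
    (hp : p ∈ shad C) (hq : q ∈ shad C) (hpq : p ≠ q) :
    vadd p q ∈ shad C ∧ ∀ r ∈ shad C, r = p ∨ r = q ∨ r = vadd p q := by
  obtain ⟨d, hd, hdp, hdq⟩ := shad_third hC hp hq hpq
  have hsum : d = vadd p q := shad_closure hC hp hq hd hpq (fun h => hdp h.symm) (fun h => hdq h.symm)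
  refine ⟨hsum ▸ hd, ?_⟩
  intro r hr
  by_cases h1 : r = p
  · exact Or.inl h1
  by_cases h2 : r = q
  · exact Or.inr (Or.inl h2)
  exact Or.inr (Or.inr (shad_closure hC hp hq hr hpq (fun h => h1 h.symm) (fun h => h2 h.symm)))

lemma shad_disj {C D : Set (QMat 2)} (h : ClassDisjoint C D) {v : V2}
    (hv : v ∈ shad C) (hw : v ∈ shad D) : False :=
  h _ hv _ hw (phase_refl _)

lemma cover (S : Fin 5 → Set (QMat 2)) (hmax : ∀ i, IsMaxClass 2 (S i))
    (hdisj : ∀ i j, i ≠ j → ClassDisjoint (S i) (S j)) :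
    ∀ v : V2, v ≠ z2 → ∃ i : Fin 5, v ∈ shad (S i) := by
  intro v hv
  set s : Fin 5 → Set V2 := fun i => shad (S i) with hs
  have hd : ∀ i j, i ≠ j → Disjoint (s i) (s j) := by
    intro i j hij
    rw [Set.disjoint_left]
    intro x hx hy
    exact shad_disj (hdisj i j hij) hx hy
  have hc : ∀ i, (s i).ncard = 3 := fun i => shad_ncard (hmax i)
  have hfin : ∀ (A : Set V2), A.Finite := fun A => A.toFinite
  have n01 : (s 0 ∪ s 1).ncard = 6 := by
    rw [Set.ncard_union_eq (hd 0 1 (by decide)) (hfin _) (hfin _), hc, hc]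
  have d012 : Disjoint (s 0 ∪ s 1) (s 2) :=
    Set.disjoint_union_left.mpr ⟨hd 0 2 (by decide), hd 1 2 (by decide)⟩
  have n012 : (s 0 ∪ s 1 ∪ s 2).ncard = 9 := by
    rw [Set.ncard_union_eq d012 (hfin _) (hfin _), n01, hc]
  have d0123 : Disjoint (s 0 ∪ s 1 ∪ s 2) (s 3) :=
    Set.disjoint_union_left.mpr ⟨Set.disjoint_union_left.mpr
      ⟨hd 0 3 (by decide), hd 1 3 (by decide)⟩, hd 2 3 (by decide)⟩
  have n0123 : (s 0 ∪ s 1 ∪ s 2 ∪ s 3).ncard = 12 := by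
    rw [Set.ncard_union_eq d0123 (hfin _) (hfin _), n012, hc]
  have dall : Disjoint (s 0 ∪ s 1 ∪ s 2 ∪ s 3) (s 4) :=
    Set.disjoint_union_left.mpr ⟨Set.disjoint_union_left.mpr ⟨Set.disjoint_union_left.mpr
      ⟨hd 0 4 (by decide), hd 1 4 (by decide)⟩, hd 2 4 (by decide)⟩, hd 3 4 (by decide)⟩
  have nall : (s 0 ∪ s 1 ∪ s 2 ∪ s 3 ∪ s 4).ncard = 15 := by
    rw [Set.ncard_union_eq dall (hfin _) (hfin _), n0123, hc]
  have hsub : (s 0 ∪ s 1 ∪ s 2 ∪ s 3 ∪ s 4) ⊆ (Set.univ \ {z2}) := by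
    intro x hx
    refine ⟨Set.mem_univ x, ?_⟩
    simp only [Set.mem_singleton_iff]
    rcases hx with ((((h|h)|h)|h)|h) <;> exact shad_ne_zero (hmax _) h
  have hA : (Set.univ \ ({z2} : Set V2)).ncard = 15 := by
    rw [Set.ncard_diff_singleton_of_mem (Set.mem_univ z2), Set.ncard_univ]
    simp [Nat.card_eq_fintype_card]
  have heq : (s 0 ∪ s 1 ∪ s 2 ∪ s 3 ∪ s 4) = (Set.univ \ {z2}) :=
    Set.eq_of_subset_of_ncard_le hsub (by rw [hA, nall]) (hfin _)
  have hvm : v ∈ (Set.univ \ ({z2} : Set V2)) := ⟨Set.mem_univ v, by simpa using hv⟩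
  rw [← heq] at hvm
  rcases hvm with ((((h|h)|h)|h)|h)
  exacts [⟨0, h⟩, ⟨1, h⟩, ⟨2, h⟩, ⟨3, h⟩, ⟨4, h⟩]

lemma no_two {T' Si : Set (QMat 2)} (hT' : IsMaxClass 2 T') (hSi : IsMaxClass 2 Si)
    (hne : shad T' ≠ shad Si) {x y : V2} (hx : x ∈ shad T') (hxi : x ∈ shad Si)
    (hy : y ∈ shad T') (hyi : y ∈ shad Si) (hxy : x ≠ y) : False := by
  apply hne
  ext v
  constructor
  · intro hv
    rcases (shad_two hT' hx hy hxy).2 v hv with rfl|rfl|rfl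
    · exact hxi
    · exact hyi
    · exact (shad_two hSi hxi hyi hxy).1
  · intro hv
    rcases (shad_two hSi hxi hyi hxy).2 v hv with rfl|rfl|rfl
    · exact hx
    · exact hy
    · exact (shad_two hT' hx hy hxy).1


lemma assign3 {A B C : Set V2} {a b c : V2} (hab : a ≠ b) (hac : a ≠ c) (hbc : b ≠ c)
    (ha : a ∈ A ∨ a ∈ B ∨ a ∈ C) (hb : b ∈ A ∨ b ∈ B ∨ b ∈ C) (hc : c ∈ A ∨ c ∈ B ∨ c ∈ C)
    (nA : ∀ x y : V2, (x = a ∨ x = b ∨ x = c) → (y = a ∨ y = b ∨ y = c) → x ≠ y → x ∈ A → y ∈ A → False)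
    (nB : ∀ x y : V2, (x = a ∨ x = b ∨ x = c) → (y = a ∨ y = b ∨ y = c) → x ≠ y → x ∈ B → y ∈ B → False)
    (nC : ∀ x y : V2, (x = a ∨ x = b ∨ x = c) → (y = a ∨ y = b ∨ y = c) → x ≠ y → x ∈ C → y ∈ C → False) :
    ∃ p q r : V2, p ∈ A ∧ q ∈ B ∧ r ∈ C ∧ p ≠ q ∧ p ≠ r ∧ q ≠ r ∧
      (p = a ∨ p = b ∨ p = c) ∧ (q = a ∨ q = b ∨ q = c) ∧ (r = a ∨ r = b ∨ r = c) ∧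
      (∀ v : V2, (v = a ∨ v = b ∨ v = c) → (v = p ∨ v = q ∨ v = r)) := by
  rcases ha with h1|h1|h1 <;> rcases hb with h2|h2|h2 <;> rcases hc with h3|h3|h3

  · exact absurd (nA a b (by tauto) (by tauto) hab h1 h2) (fun h => h)
  · exact absurd (nA a b (by tauto) (by tauto) hab h1 h2) (fun h => h)
  · exact absurd (nA a b (by tauto) (by tauto) hab h1 h2) (fun h => h)
  · exact absurd (nA a c (by tauto) (by tauto) hac h1 h3) (fun h => h)
  · exact absurd (nB b c (by tauto) (by tauto) hbc h2 h3) (fun h => h)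
  · exact ⟨a, b, c, h1, h2, h3, hab, hac, hbc, by tauto, by tauto, by tauto, fun v hv => by tauto⟩
  · exact absurd (nA a c (by tauto) (by tauto) hac h1 h3) (fun h => h)
  · exact ⟨a, c, b, h1, h3, h2, hac, hab, (fun h => hbc h.symm), by tauto, by tauto, by tauto, fun v hv => by tauto⟩
  · exact absurd (nC b c (by tauto) (by tauto) hbc h2 h3) (fun h => h)
  · exact absurd (nA b c (by tauto) (by tauto) hbc h2 h3) (fun h => h)
  · exact absurd (nB a c (by tauto) (by tauto) hac h1 h3) (fun h => h)
  · exact ⟨b, a, c, h2, h1, h3, (fun h => hab h.symm), hbc, hac, by tauto, by tauto, by tauto, fun v hv => by tauto⟩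
  · exact absurd (nB a b (by tauto) (by tauto) hab h1 h2) (fun h => h)
  · exact absurd (nB a b (by tauto) (by tauto) hab h1 h2) (fun h => h)
  · exact absurd (nB a b (by tauto) (by tauto) hab h1 h2) (fun h => h)
  · exact ⟨c, a, b, h3, h1, h2, (fun h => hac h.symm), (fun h => hbc h.symm), hab, by tauto, by tauto, by tauto, fun v hv => by tauto⟩
  · exact absurd (nB a c (by tauto) (by tauto) hac h1 h3) (fun h => h)
  · exact absurd (nC b c (by tauto) (by tauto) hbc h2 h3) (fun h => h)
  · exact absurd (nA b c (by tauto) (by tauto) hbc h2 h3) (fun h => h)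
  · exact ⟨b, c, a, h2, h3, h1, hbc, (fun h => hab h.symm), (fun h => hac h.symm), by tauto, by tauto, by tauto, fun v hv => by tauto⟩
  · exact absurd (nC a c (by tauto) (by tauto) hac h1 h3) (fun h => h)
  · exact ⟨c, b, a, h3, h2, h1, (fun h => hbc h.symm), (fun h => hac h.symm), (fun h => hab h.symm), by tauto, by tauto, by tauto, fun v hv => by tauto⟩
  · exact absurd (nB b c (by tauto) (by tauto) hbc h2 h3) (fun h => h)
  · exact absurd (nC a c (by tauto) (by tauto) hac h1 h3) (fun h => h)
  · exact absurd (nC a b (by tauto) (by tauto) hab h1 h2) (fun h => h)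
  · exact absurd (nC a b (by tauto) (by tauto) hab h1 h2) (fun h => h)
  · exact absurd (nC a b (by tauto) (by tauto) hab h1 h2) (fun h => h)


/-- With `{S 0, …, S 4}` a complete set of Pauli classes in `d = 4` and `T`
the unique maximal commuting Pauli class (not equal up to phase to any of `S 0, S 1, S 2`)
whose members are, up to phase, members of `S 0 ∪ S 1 ∪ S 2`, the classes `T`, `S 3`, `S 4`
are pairwise disjoint and the family `{T, S 3, S 4}` is unextendible. -/
theorem unext_three_classes_d4 (S : Fin 5 → Set (QMat 2)) (T : Set (QMat 2))
    (hmax : ∀ i, IsMaxClass 2 (S i))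
    (hdisj : ∀ i j, i ≠ j → ClassDisjoint (S i) (S j))
    (hT : IsMaxClass 2 T)
    (hTsub : ∀ U ∈ T, ∃ V ∈ S 0 ∪ S 1 ∪ S 2, PhaseEq U V)
    (hTne : ∀ i : Fin 5, i.val < 3 → ¬ ClassPhaseEq T (S i)) :
    (ClassDisjoint T (S 3) ∧ ClassDisjoint T (S 4) ∧ ClassDisjoint (S 3) (S 4)) ∧
    ¬ ∃ R : Set (QMat 2), IsMaxClass 2 R ∧
        ∀ U ∈ R, ∀ V ∈ T ∪ S 3 ∪ S 4, ¬ PhaseEq U V := by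
  -- shadow of T is inside the union of first three shadows
  have hTsh : ∀ v ∈ shad T, v ∈ shad (S 0) ∨ v ∈ shad (S 1) ∨ v ∈ shad (S 2) := by
    intro v hv
    obtain ⟨Vm, hVm, hPE⟩ := hTsub (P v) hv
    rcases hVm with (h | h) | h
    · obtain ⟨w, hw, rfl⟩ := mem_shad (hmax 0) h
      have hvw := phaseEq_P hPE
      exact Or.inl (hvw ▸ hw)
    · obtain ⟨w, hw, rfl⟩ := mem_shad (hmax 1) h
      have hvw := phaseEq_P hPE
      exact Or.inr (Or.inl (hvw ▸ hw))
    · obtain ⟨w, hw, rfl⟩ := mem_shad (hmax 2) h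
      have hvw := phaseEq_P hPE
      exact Or.inr (Or.inr (hvw ▸ hw))
  have hTneS : ∀ i : Fin 5, i.val < 3 → shad T ≠ shad (S i) := by
    intro i hi hEq
    apply hTne i hi
    constructor
    · intro U hU
      obtain ⟨u, hu, rfl⟩ := mem_shad hT hU
      have hu' : u ∈ shad (S i) := hEq ▸ hu
      exact ⟨P u, hu', phase_refl _⟩
    · intro Vv hV
      obtain ⟨w, hw, rfl⟩ := mem_shad (hmax i) hV
      have hw' : w ∈ shad T := hEq.symm ▸ hw
      exact ⟨P w, hw', phase_refl _⟩
  have hTd3 : ∀ v ∈ shad T, v ∈ shad (S 3) → False := by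
    intro v hv h3
    rcases hTsh v hv with h | h | h
    · exact shad_disj (hdisj 0 3 (by decide)) h h3
    · exact shad_disj (hdisj 1 3 (by decide)) h h3
    · exact shad_disj (hdisj 2 3 (by decide)) h h3
  have hTd4 : ∀ v ∈ shad T, v ∈ shad (S 4) → False := by
    intro v hv h4
    rcases hTsh v hv with h | h | h
    · exact shad_disj (hdisj 0 4 (by decide)) h h4
    · exact shad_disj (hdisj 1 4 (by decide)) h h4
    · exact shad_disj (hdisj 2 4 (by decide)) h h4
  refine ⟨⟨?_, ?_, hdisj 3 4 (by decide)⟩, ?_⟩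
  · intro U hU Vv hV hPE
    obtain ⟨u, hu, rfl⟩ := mem_shad hT hU
    obtain ⟨w, hw, rfl⟩ := mem_shad (hmax 3) hV
    have huw := phaseEq_P hPE
    exact hTd3 u hu (huw ▸ hw)
  · intro U hU Vv hV hPE
    obtain ⟨u, hu, rfl⟩ := mem_shad hT hU
    obtain ⟨w, hw, rfl⟩ := mem_shad (hmax 4) hV
    have huw := phaseEq_P hPE
    exact hTd4 u hu (huw ▸ hw)
  rintro ⟨R, hR, hRdis⟩
  -- shadow of R avoids T, S3, S4
  have hRt : ∀ v ∈ shad R, v ∈ shad T → False := fun v hv ht =>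
    hRdis (P v) hv (P v) (Set.mem_union_left _ (Set.mem_union_left _ ht)) (phase_refl _)
  have hR3 : ∀ v ∈ shad R, v ∈ shad (S 3) → False := fun v hv h3 =>
    hRdis (P v) hv (P v) (Set.mem_union_left _ (Set.mem_union_right _ h3)) (phase_refl _)
  have hR4 : ∀ v ∈ shad R, v ∈ shad (S 4) → False := fun v hv h4 =>
    hRdis (P v) hv (P v) (Set.mem_union_right _ h4) (phase_refl _)
  -- extract t0 t1 t2
  obtain ⟨a, b, c, hab, hac, hbc, htset, hcab⟩ := shad_three hT
  have haT : a ∈ shad T := by rw [htset]; exact Or.inl rfl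
  have hbT : b ∈ shad T := by rw [htset]; exact Or.inr (Or.inl rfl)
  have hcT : c ∈ shad T := by rw [htset]; exact Or.inr (Or.inr rfl)
  have hmemT : ∀ x : V2, (x = a ∨ x = b ∨ x = c) → x ∈ shad T := by
    rintro x (rfl | rfl | rfl) <;> assumption
  obtain ⟨t0, t1, t2, ht00, ht11, ht22, ht01, ht02, ht12, ht0m, ht1m, ht2m, hcompT⟩ :=
    assign3 hab hac hbc (hTsh a haT) (hTsh b hbT) (hTsh c hcT)
      (fun x y hx hy hxy hxA hyA =>
        no_two hT (hmax 0) (hTneS 0 (by norm_num)) (hmemT x hx) hxA (hmemT y hy) hyA hxy)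
      (fun x y hx hy hxy hxA hyA =>
        no_two hT (hmax 1) (hTneS 1 (by norm_num)) (hmemT x hx) hxA (hmemT y hy) hyA hxy)
      (fun x y hx hy hxy hxA hyA =>
        no_two hT (hmax 2) (hTneS 2 (by norm_num)) (hmemT x hx) hxA (hmemT y hy) hyA hxy)
  have ht0T : t0 ∈ shad T := hmemT t0 ht0m
  have ht1T : t1 ∈ shad T := hmemT t1 ht1m
  have ht2T : t2 ∈ shad T := hmemT t2 ht2m
  have ht2sum : t2 = vadd t0 t1 := shad_closure hT ht0T ht1T ht2T ht01 ht02 ht12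
  -- extract x0 x1 x2
  obtain ⟨a', b', c', hab', hac', hbc', hrset, hcab'⟩ := shad_three hR
  have haR : a' ∈ shad R := by rw [hrset]; exact Or.inl rfl
  have hbR : b' ∈ shad R := by rw [hrset]; exact Or.inr (Or.inl rfl)
  have hcR : c' ∈ shad R := by rw [hrset]; exact Or.inr (Or.inr rfl)
  have hmemR : ∀ x : V2, (x = a' ∨ x = b' ∨ x = c') → x ∈ shad R := by
    rintro x (rfl | rfl | rfl) <;> assumption
  have hRsh : ∀ v ∈ shad R, v ∈ shad (S 0) ∨ v ∈ shad (S 1) ∨ v ∈ shad (S 2) := by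
    intro v hv
    obtain ⟨i, hi⟩ := cover S hmax hdisj v (shad_ne_zero hR hv)
    fin_cases i
    · exact Or.inl hi
    · exact Or.inr (Or.inl hi)
    · exact Or.inr (Or.inr hi)
    · exact absurd (hR3 v hv hi) (fun h => h)
    · exact absurd (hR4 v hv hi) (fun h => h)
  have hRneS : ∀ i : Fin 5, i.val < 3 → shad R ≠ shad (S i) := by
    intro i hi hEq
    have hti : ∀ x ∈ shad T, x ∈ shad (S i) → False := by
      intro x hx hxi
      rw [← hEq] at hxi
      exact hRt x hxi hx
    fin_cases i
    · exact hti t0 ht0T ht00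
    · exact hti t1 ht1T ht11
    · exact hti t2 ht2T ht22
    · exact absurd hi (by norm_num)
    · exact absurd hi (by norm_num)
  obtain ⟨x0, x1, x2, hx00, hx11, hx22, hx01, hx02, hx12, hx0m, hx1m, hx2m, hcompR⟩ :=
    assign3 hab' hac' hbc' (hRsh a' haR) (hRsh b' hbR) (hRsh c' hcR)
      (fun x y hx hy hxy hxA hyA =>
        no_two hR (hmax 0) (hRneS 0 (by norm_num)) (hmemR x hx) hxA (hmemR y hy) hyA hxy)
      (fun x y hx hy hxy hxA hyA =>
        no_two hR (hmax 1) (hRneS 1 (by norm_num)) (hmemR x hx) hxA (hmemR y hy) hyA hxy)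
      (fun x y hx hy hxy hxA hyA =>
        no_two hR (hmax 2) (hRneS 2 (by norm_num)) (hmemR x hx) hxA (hmemR y hy) hyA hxy)
  have hx0R : x0 ∈ shad R := hmemR x0 hx0m
  have hx1R : x1 ∈ shad R := hmemR x1 hx1m
  have hx2R : x2 ∈ shad R := hmemR x2 hx2m
  have hx2sum : x2 = vadd x0 x1 := shad_closure hR hx0R hx1R hx2R hx01 hx02 hx12
  -- som facts
  have s_tt : som t0 t1 = false := shad_som hT ht0T ht1T
  have s_x0t0 : som x0 t0 = false := shad_som (hmax 0) hx00 ht00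
  have s_x1t1 : som x1 t1 = false := shad_som (hmax 1) hx11 ht11
  have s_x0x1 : som x0 x1 = false := shad_som hR hx0R hx1R
  have s_x2t2 : som x2 t2 = false := shad_som (hmax 2) hx22 ht22
  have ht0z : t0 ≠ z2 := shad_ne_zero hT ht0T
  have ht1z : t1 ≠ z2 := shad_ne_zero hT ht1T
  have hx0z : x0 ≠ z2 := shad_ne_zero hR hx0R
  have hexp : xor (som x0 t1) (som x1 t0) = false := by
    have h := s_x2t2
    rw [hx2sum, ht2sum, som_add_left, som_add_right, som_add_right, s_x0t0, s_x1t1] at h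
    rcases Bool.eq_false_or_eq_true (som x0 t1) with h'|h' <;>
      rcases Bool.eq_false_or_eq_true (som x1 t0) with h''|h'' <;>
      simp [h', h''] at h ⊢
  rcases Bool.eq_false_or_eq_true (som x0 t1) with hα | hα
  case inr =>
    -- α = false: x0 is perpendicular to all of T
    rcases perp4 t0 t1 x0 ht0z ht1z ht01 s_tt s_x0t0 hα with h | h | h | h
    · exact hx0z h
    · exact hRt x0 hx0R (h ▸ ht0T)
    · exact hRt x0 hx0R (h ▸ ht1T)
    · rw [← ht2sum] at h
      exact hRt x0 hx0R (h ▸ ht2T)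
  case inl =>
    -- α = true
    have hb1 : som x1 t0 = true := by
      rcases Bool.eq_false_or_eq_true (som x1 t0) with h' | h'
      · exact h'
      · rw [hα, h'] at hexp; simp at hexp
    obtain ⟨e1, e2, e3, he12, he13, he23, hs3set, he3sum⟩ := shad_three (hmax 3)
    have he1S : e1 ∈ shad (S 3) := by rw [hs3set]; exact Or.inl rfl
    have he2S : e2 ∈ shad (S 3) := by rw [hs3set]; exact Or.inr (Or.inl rfl)
    have he3S : e3 ∈ shad (S 3) := by rw [hs3set]; exact Or.inr (Or.inr rfl)
    have hnotf : ∀ v ∈ shad (S 3), ∀ i : Fin 5, i ≠ 3 → v ∈ shad (S i) → False :=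
      fun v hv i hi hvi => shad_disj (hdisj 3 i (fun h => hi h.symm)) hv hvi
    have hnott : ∀ v ∈ shad (S 3), v ∈ shad T → False := by
      intro v hv ht
      rcases hTsh v ht with h | h | h
      · exact hnotf v hv 0 (by decide) h
      · exact hnotf v hv 1 (by decide) h
      · exact hnotf v hv 2 (by decide) h
    have hpat : ∀ v ∈ shad (S 3), ¬(som v t0 = false ∧ som v t1 = false) := by
      rintro v hv ⟨h0', h1'⟩
      rcases perp4 t0 t1 v ht0z ht1z ht01 s_tt h0' h1' with h | h | h | h
      · exact shad_ne_zero (hmax 3) hv h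
      · exact hnott v hv (h ▸ ht0T)
      · exact hnott v hv (h ▸ ht1T)
      · rw [← ht2sum] at h
        exact hnott v hv (h ▸ ht2T)
    have ht0x0 : t0 ≠ x0 := fun h => hRt x0 hx0R (h ▸ ht0T)
    have ht1x1 : t1 ≠ x1 := fun h => hRt x1 hx1R (h ▸ ht1T)
    have ht2x2 : t2 ≠ x2 := fun h => hRt x2 hx2R (h ▸ ht2T)
    have hv0 : vadd t0 x0 ∈ shad (S 0) := (shad_two (hmax 0) ht00 hx00 ht0x0).1
    have hv1 : vadd t1 x1 ∈ shad (S 1) := (shad_two (hmax 1) ht11 hx11 ht1x1).1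
    have hv2 : vadd (vadd t0 t1) (vadd x0 x1) ∈ shad (S 2) := by
      rw [← ht2sum, ← hx2sum]
      exact (shad_two (hmax 2) ht22 hx22 ht2x2).1
    have hx2' : vadd x0 x1 ∈ shad (S 2) := by rw [← hx2sum]; exact hx22
    have hny : ∀ y ∈ shad (S 3), y ≠ x0 ∧ y ≠ vadd t0 x0 ∧ y ≠ x1 ∧ y ≠ vadd t1 x1 ∧
        y ≠ vadd x0 x1 ∧ y ≠ vadd (vadd t0 t1) (vadd x0 x1) := by
      intro y hy
      refine ⟨?_, ?_, ?_, ?_, ?_, ?_⟩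
      · exact fun h => hnotf y hy 0 (by decide) (h ▸ hx00)
      · exact fun h => hnotf y hy 0 (by decide) (h ▸ hv0)
      · exact fun h => hnotf y hy 1 (by decide) (h ▸ hx11)
      · exact fun h => hnotf y hy 1 (by decide) (h ▸ hv1)
      · exact fun h => hnotf y hy 2 (by decide) (h ▸ hx2')
      · exact fun h => hnotf y hy 2 (by decide) (h ▸ hv2)
    obtain ⟨hn1a, hn1b, hn1c, hn1d, hn1e, hn1f⟩ := hny e1 he1S
    obtain ⟨hn2a, hn2b, hn2c, hn2d, hn2e, hn2f⟩ := hny e2 he2S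
    obtain ⟨hn3a, hn3b, hn3c, hn3d, hn3e, hn3f⟩ := hny e3 he3S
    have se12 : som e1 e2 = false := shad_som (hmax 3) he1S he2S
    have se13 : som e1 e3 = false := shad_som (hmax 3) he1S he3S
    have se23 : som e2 e3 = false := shad_som (hmax 3) he2S he3S
    have hsum12 : vadd e1 e2 = e3 := he3sum.symm
    have hsum21 : vadd e2 e1 = e3 := by rw [vadd_comm']; exact he3sum.symm
    have hsum13 : vadd e1 e3 = e2 := by rw [he3sum, vadd_cancel']
    have hsum31 : vadd e3 e1 = e2 := by rw [vadd_comm', hsum13]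
    have hsum23 : vadd e2 e3 = e1 := by rw [he3sum, vadd_comm' e1 e2, vadd_cancel']
    have hsum32 : vadd e3 e2 = e1 := by rw [vadd_comm', hsum23]
    have he3t0 : som e3 t0 = xor (som e1 t0) (som e2 t0) := by rw [he3sum, som_add_left]
    have he3t1 : som e3 t1 = xor (som e1 t1) (som e2 t1) := by rw [he3sum, som_add_left]
    have kill' : ∀ p q r : V2, som p q = false → vadd p q = r →
        p ≠ x0 → p ≠ vadd t0 x0 → q ≠ x1 → q ≠ vadd t1 x1 →
        r ≠ vadd x0 x1 → r ≠ vadd (vadd t0 t1) (vadd x0 x1) →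
        som p t0 = false → som p t1 = true → som q t0 = true → som q t1 = false → False := by
      intro p q r hpq hr hp1 hp2 hq1 hq2 hr1 hr2 hpt0 hpt1 hqt0 hqt1
      exact kill t0 t1 x0 x1 p q ht0z ht1z ht01 s_tt s_x0t0 s_x1t1 s_x0x1 hα hb1
        hp1 hp2 hq1 hq2 hpt0 hpt1 hqt0 hqt1 hpq (hr ▸ hr1) (hr ▸ hr2)
    rcases Bool.eq_false_or_eq_true (som e1 t0) with h10|h10 <;>
      rcases Bool.eq_false_or_eq_true (som e1 t1) with h11|h11 <;>
      rcases Bool.eq_false_or_eq_true (som e2 t0) with h20|h20 <;>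
      rcases Bool.eq_false_or_eq_true (som e2 t1) with h21|h21
    -- (t,t,t,t)
    · exact hpat e3 he3S ⟨by rw [he3t0, h10, h20]; rfl, by rw [he3t1, h11, h21]; rfl⟩
    -- (t,t,t,f): p = e3 (f,t), q = e2
    · exact kill' e3 e2 e1 (by rw [som_symm]; exact se23) hsum32 hn3a hn3b hn2c hn2d hn1e hn1f
        (by rw [he3t0, h10, h20]; rfl) (by rw [he3t1, h11, h21]; rfl) h20 h21
    -- (t,t,f,t): p = e2, q = e3 (t,f)
    · exact kill' e2 e3 e1 se23 hsum23 hn2a hn2b hn3c hn3d hn1e hn1f h20 h21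
        (by rw [he3t0, h10, h20]; rfl) (by rw [he3t1, h11, h21]; rfl)
    -- (t,t,f,f)
    · exact hpat e2 he2S ⟨h20, h21⟩
    -- (t,f,t,t): p = e3 (f,t), q = e1
    · exact kill' e3 e1 e2 (by rw [som_symm]; exact se13) hsum31 hn3a hn3b hn1c hn1d hn2e hn2f
        (by rw [he3t0, h10, h20]; rfl) (by rw [he3t1, h11, h21]; rfl) h10 h11
    -- (t,f,t,f): equal
    · exact hpat e3 he3S ⟨by rw [he3t0, h10, h20]; rfl, by rw [he3t1, h11, h21]; rfl⟩
    -- (t,f,f,t): p = e2, q = e1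
    · exact kill' e2 e1 e3 (by rw [som_symm]; exact se12) hsum21 hn2a hn2b hn1c hn1d hn3e hn3f
        h20 h21 h10 h11
    -- (t,f,f,f)
    · exact hpat e2 he2S ⟨h20, h21⟩
    -- (f,t,t,t): p = e1, q = e3 (t,f)
    · exact kill' e1 e3 e2 se13 hsum13 hn1a hn1b hn3c hn3d hn2e hn2f h10 h11
        (by rw [he3t0, h10, h20]; rfl) (by rw [he3t1, h11, h21]; rfl)
    -- (f,t,t,f): p = e1, q = e2
    · exact kill' e1 e2 e3 se12 hsum12 hn1a hn1b hn2c hn2d hn3e hn3f h10 h11 h20 h21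
    -- (f,t,f,t): equal
    · exact hpat e3 he3S ⟨by rw [he3t0, h10, h20]; rfl, by rw [he3t1, h11, h21]; rfl⟩
    -- (f,t,f,f)
    · exact hpat e2 he2S ⟨h20, h21⟩
    -- (f,f,*,*)
    · exact hpat e1 he1S ⟨h10, h11⟩
    · exact hpat e1 he1S ⟨h10, h11⟩
    · exact hpat e1 he1S ⟨h10, h11⟩
    · exact hpat e1 he1S ⟨h10, h11⟩
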